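/- If f₀ is uniformly continuous on ℝ, then sup_{u ∈ ℝ} |f_n(u) − f₀(u)| → 0 as n → ∞. -/

import Mathlib

open MeasureTheory Filter Topology

noncomputable def gaussK : ℝ → ℝ := fun x => (Real.sqrt (2 * Real.pi))⁻¹ * Real.exp (-x ^ 2 / 2)

lemma gaussK_nonneg (x : ℝ) : 0 ≤ gaussK x := by
  unfold gaussK; positivity

lemma gaussK_integrable : Integrable gaussK := by
  have : Integrable (fun x : ℝ => Real.exp (-(1/2 : ℝ) * x ^ 2)) := integrable_exp_neg_mul_sq (by norm_num)
  have h2 := this.const_mul (Real.sqrt (2 * Real.pi))⁻¹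
  refine h2.congr (Eventually.of_forall fun x => ?_)
  unfold gaussK; ring_nf

lemma gaussK_integral : ∫ x, gaussK x = 1 := by
  unfold gaussK
  rw [integral_const_mul]
  have : (fun x : ℝ => Real.exp (-x ^ 2 / 2)) = fun x : ℝ => Real.exp (-(1/2 : ℝ) * x ^ 2) := by
    ext x; ring_nf
  rw [this, integral_gaussian]
  rw [inv_mul_eq_one₀ (by positivity)]
  rw [show (2:ℝ)*Real.pi = Real.pi/(1/2) by ring]

lemma gaussK_hasDerivAt (x : ℝ) : HasDerivAt gaussK (-x * gaussK x) x := by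
  unfold gaussK
  have h1 : HasDerivAt (fun x : ℝ => -x ^ 2 / 2) (-x) x := by
    have := ((hasDerivAt_pow 2 x).neg).div_const 2
    simpa using this.congr_deriv (by ring)
  have h2 := (h1.exp).const_mul (Real.sqrt (2 * Real.pi))⁻¹
  exact h2.congr_deriv (by ring)

lemma gaussK_deriv_integrable : Integrable (fun x : ℝ => -x * gaussK x) := by
  have : Integrable (fun x : ℝ => x * Real.exp (-(1/2:ℝ) * x ^ 2)) := integrable_mul_exp_neg_mul_sq (by norm_num)
  have h2 := (this.const_mul (-(Real.sqrt (2 * Real.pi))⁻¹))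
  refine h2.congr (Eventually.of_forall fun x => ?_)
  unfold gaussK; ring_nf

lemma gaussK_tendsto_atTop : Tendsto gaussK atTop (𝓝 0) := by
  have h : Tendsto (fun x : ℝ => -x ^ 2 / 2) atTop atBot := by
    apply Tendsto.atBot_div_const (by norm_num)
    exact tendsto_neg_atBot_iff.mpr (tendsto_pow_atTop (by norm_num))
  have h2 := (Real.tendsto_exp_atBot.comp h).const_mul (Real.sqrt (2 * Real.pi))⁻¹
  rw [mul_zero] at h2
  exact h2.congr fun x => by simp [gaussK, Function.comp]

lemma gaussK_tendsto_atBot : Tendsto gaussK atBot (𝓝 0) := by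
  have h : Tendsto (fun x : ℝ => -x ^ 2 / 2) atBot atBot := by
    apply Tendsto.atBot_div_const (by norm_num)
    rw [tendsto_neg_atBot_iff]
    have := (tendsto_pow_atTop (n := 2) (by norm_num)).comp (tendsto_neg_atBot_atTop (G := ℝ))
    exact this.congr fun x => by simp [Function.comp]
  have h2 := (Real.tendsto_exp_atBot.comp h).const_mul (Real.sqrt (2 * Real.pi))⁻¹
  rw [mul_zero] at h2
  exact h2.congr fun x => by simp [gaussK, Function.comp]

lemma gaussK_continuous : Continuous gaussK := by
  unfold gaussK; fun_prop

lemma chvar (η : ℝ) (hη : 0 < η) (u : ℝ) (h : ℝ → ℝ) :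
    ∫ t, h ((u - t) / η) = η * ∫ x, h x := by
  have h1 : ∫ t, (fun y => h (y / η)) (u - t) = ∫ y, h (y / η) :=
    integral_sub_left_eq_self (fun y => h (y / η)) volume u
  have h2 : ∫ y : ℝ, h (y / η) = |η| • ∫ x, h x := MeasureTheory.Measure.integral_comp_div h η
  simp only [smul_eq_mul, abs_of_pos hη] at h2
  simpa [h2] using h1

lemma kernel_hasDerivAt (η : ℝ) (u s : ℝ) :
    HasDerivAt (fun t => η⁻¹ * gaussK ((u - t) / η))
      (η⁻¹ * (-((u - s) / η) * gaussK ((u - s) / η) * (-η⁻¹))) s := by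
  have hinner : HasDerivAt (fun t : ℝ => (u - t) / η) (-η⁻¹) s := by
    have := ((hasDerivAt_id s).const_sub u).div_const η
    have he : -η⁻¹ = -1 / η := by ring
    rw [he]
    exact this.congr_deriv (by ring)
  exact ((gaussK_hasDerivAt _).comp s hinner).const_mul η⁻¹

noncomputable def kd (η u s : ℝ) : ℝ := η⁻¹ * (-((u - s) / η) * gaussK ((u - s) / η) * (-η⁻¹))

lemma kd_continuous (η u : ℝ) : Continuous (kd η u) := by
  unfold kd
  have h : Continuous fun s => gaussK ((u - s) / η) :=
    gaussK_continuous.comp (by fun_prop)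
  fun_prop

lemma kd_integrable {η : ℝ} (hη : 0 < η) (u : ℝ) : Integrable (kd η u) := by
  have h1 : Integrable fun y : ℝ => -(y / η) * gaussK (y / η) :=
    gaussK_deriv_integrable.comp_div hη.ne'
  have h2 : Integrable fun s : ℝ => -((u - s) / η) * gaussK ((u - s) / η) :=
    h1.comp_sub_left u
  refine (h2.const_mul (-(η⁻¹ * η⁻¹))).congr (Eventually.of_forall fun s => ?_)
  unfold kd; ring

lemma kd_norm_integral {η : ℝ} (hη : 0 < η) (u : ℝ) :
    ∫ s, |kd η u s| = η⁻¹ * ∫ x, |x * gaussK x| := by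
  have h1 : ∀ s, |kd η u s| = (η⁻¹ * η⁻¹) * |((u - s) / η) * gaussK ((u - s) / η)| := by
    intro s
    have : kd η u s = (η⁻¹ * η⁻¹) * (((u - s) / η) * gaussK ((u - s) / η)) := by unfold kd; ring
    rw [this, abs_mul, abs_of_nonneg (by positivity)]
  simp_rw [h1]
  rw [integral_const_mul, chvar η hη u (fun x => |x * gaussK x|)]
  field_simp

lemma k_tendsto_atTop {η : ℝ} (hη : 0 < η) (u : ℝ) :
    Tendsto (fun t => η⁻¹ * gaussK ((u - t) / η)) atTop (𝓝 0) := by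
  have h0 : Tendsto (fun t : ℝ => (u - t) / η) atTop atBot := by
    apply Tendsto.atBot_div_const hη
    have := tendsto_atBot_add_const_left atTop u (tendsto_neg_atTop_atBot (G := ℝ))
    exact this.congr fun t => by ring
  have := (gaussK_tendsto_atBot.comp h0).const_mul η⁻¹
  rw [mul_zero] at this
  exact this.congr fun t => by simp [Function.comp]

lemma k_tendsto_atBot {η : ℝ} (hη : 0 < η) (u : ℝ) :
    Tendsto (fun t => η⁻¹ * gaussK ((u - t) / η)) atBot (𝓝 0) := by
  have h0 : Tendsto (fun t : ℝ => (u - t) / η) atBot atTop := by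
    apply Tendsto.atTop_div_const hη
    have := tendsto_atTop_add_const_left atBot u (tendsto_neg_atBot_atTop (G := ℝ))
    exact this.congr fun t => by ring
  have := (gaussK_tendsto_atTop.comp h0).const_mul η⁻¹
  rw [mul_zero] at this
  exact this.congr fun t => by simp [Function.comp]

lemma ftc_Ioi {η : ℝ} (hη : 0 < η) (u t : ℝ) :
    ∫ s in Set.Ioi t, kd η u s = -(η⁻¹ * gaussK ((u - t) / η)) := by
  have := integral_Ioi_of_hasDerivAt_of_tendsto' (a := t)
    (f := fun t' => η⁻¹ * gaussK ((u - t') / η)) (f' := kd η u)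
    (fun x _ => kernel_hasDerivAt η u x) ((kd_integrable hη u).integrableOn)
    (k_tendsto_atTop hη u)
  rw [this]; ring

lemma ftc_Iic {η : ℝ} (hη : 0 < η) (u t : ℝ) :
    ∫ s in Set.Iic t, kd η u s = η⁻¹ * gaussK ((u - t) / η) := by
  have := integral_Iic_of_hasDerivAt_of_tendsto' (a := t)
    (f := fun t' => η⁻¹ * gaussK ((u - t') / η)) (f' := kd η u)
    (fun x _ => kernel_hasDerivAt η u x) ((kd_integrable hη u).integrableOn)
    (k_tendsto_atBot hη u)
  rw [this]; ring

lemma kd_total {η : ℝ} (hη : 0 < η) (u : ℝ) : ∫ s, kd η u s = 0 := by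
  have h := intervalIntegral.integral_Iic_add_Ioi (μ := volume) (f := kd η u) (b := (0:ℝ))
    ((kd_integrable hη u).integrableOn) ((kd_integrable hη u).integrableOn)
  rw [ftc_Iic hη u 0, ftc_Ioi hη u 0] at h
  linarith [h]

lemma rep (μ : Measure ℝ) [IsFiniteMeasure μ] {η : ℝ} (hη : 0 < η) (u : ℝ) :
    ∫ t, η⁻¹ * gaussK ((u - t) / η) ∂μ
      = ∫ s, (μ (Set.Iic s)).toReal * (-kd η u s) := by
  set P : ℝ × ℝ → ℝ := fun z => ({p : ℝ × ℝ | p.1 ≤ p.2}).indicator (fun z => -kd η u z.2) z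
    with hP
  have hPval : ∀ t s : ℝ, P (t, s) = (Set.Ici t).indicator (fun s => -kd η u s) s := by
    intro t s
    by_cases h : t ≤ s <;> simp [hP, Set.indicator_apply, h]
  have hPval2 : ∀ t s : ℝ, P (t, s) = (Set.Iic s).indicator (fun _ => -kd η u s) t := by
    intro t s
    by_cases h : t ≤ s <;> simp [hP, Set.indicator_apply, h]
  have hPmeas : Measurable P :=
    (((kd_continuous η u).measurable.comp measurable_snd).neg).indicator
      (measurableSet_le measurable_fst measurable_snd)
  have hbound : Integrable (fun z : ℝ × ℝ => ‖kd η u z.2‖) (μ.prod volume) := by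
    rw [integrable_prod_iff]
    · constructor
      · exact Eventually.of_forall fun t => (kd_integrable hη u).norm
      · apply integrable_const ((∫ s, ‖kd η u s‖ : ℝ)) |>.congr
        exact Eventually.of_forall fun t => by simp
    · exact (((kd_continuous η u).measurable.comp measurable_snd).norm).aestronglyMeasurable
  have hPint : Integrable P (μ.prod volume) := by
    refine hbound.mono' hPmeas.aestronglyMeasurable (Eventually.of_forall fun z => ?_)
    calc ‖P z‖ ≤ ‖-kd η u z.2‖ := norm_indicator_le_norm_self _ _
    _ = ‖kd η u z.2‖ := by rw [norm_neg]
  have hswap : ∫ t, (∫ s, P (t, s)) ∂μ = ∫ s, ∫ t, P (t, s) ∂μ := by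
    exact integral_integral_swap hPint
  have hk : ∀ t, η⁻¹ * gaussK ((u - t) / η) = ∫ s, P (t, s) := by
    intro t
    simp_rw [hPval t]
    rw [integral_indicator measurableSet_Ici, integral_Ici_eq_integral_Ioi, integral_neg,
      ftc_Ioi hη u t, neg_neg]
  have hin : ∀ s, (∫ t, P (t, s) ∂μ) = (μ (Set.Iic s)).toReal * (-kd η u s) := by
    intro s
    simp_rw [hPval2]
    rw [integral_indicator measurableSet_Iic, setIntegral_const, smul_eq_mul, measureReal_def]
  calc ∫ t, η⁻¹ * gaussK ((u - t) / η) ∂μ = ∫ t, (∫ s, P (t, s)) ∂μ := by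
        congr 1; ext t; exact hk t
    _ = ∫ s, ∫ t, P (t, s) ∂μ := hswap
    _ = ∫ s, (μ (Set.Iic s)).toReal * (-kd η u s) := by
        congr 1; ext s; exact hin s

lemma conv_chvar {η : ℝ} (hη : 0 < η) (u : ℝ) (w : ℝ → ℝ) :
    ∫ t, η⁻¹ * gaussK ((u - t) / η) * w t = ∫ x, gaussK x * w (u - η * x) := by
  have h := chvar η hη u (fun x => η⁻¹ * gaussK x * w (u - η * x))
  have e : ∀ t : ℝ, u - η * ((u - t) / η) = t := fun t => by field_simp; ring
  have h2 : (fun t => η⁻¹ * gaussK ((u - t) / η) * w t)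
      = fun t => (fun x => η⁻¹ * gaussK x * w (u - η * x)) ((u - t) / η) := by
    ext t; simp only; rw [e t]
  rw [h2, h, ← integral_const_mul]
  congr 1; ext x
  field_simp

lemma conv_rep {η : ℝ} (hη : 0 < η) (u : ℝ) (f₀ : ℝ → ℝ) (hc : Continuous f₀)
    (hnn : ∀ x, 0 ≤ f₀ x) (hint : Integrable f₀) :
    ∫ t, η⁻¹ * gaussK ((u - t) / η) * f₀ t
      = ∫ s, (∫ r in Set.Iic s, f₀ r) * (-kd η u s) := by
  set ν : Measure ℝ := volume.withDensity (fun t => ENNReal.ofReal (f₀ t)) with hν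
  have hmeas : Measurable fun t => (f₀ t).toNNReal := hc.measurable.real_toNNReal
  haveI : IsFiniteMeasure ν := by
    constructor
    rw [hν, withDensity_apply _ MeasurableSet.univ, Measure.restrict_univ,
      ← ofReal_integral_eq_lintegral_ofReal hint (Eventually.of_forall hnn)]
    exact ENNReal.ofReal_lt_top
  have h1 : ∫ t, η⁻¹ * gaussK ((u - t) / η) ∂ν
      = ∫ t, η⁻¹ * gaussK ((u - t) / η) * f₀ t := by
    rw [hν, show (fun t => ENNReal.ofReal (f₀ t)) = (fun t => ((f₀ t).toNNReal : ENNReal)) from rfl,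
      integral_withDensity_eq_integral_smul hmeas]
    congr 1; ext t
    rw [NNReal.smul_def, smul_eq_mul, Real.coe_toNNReal _ (hnn t)]
    ring
  have h2 : ∀ s, (ν (Set.Iic s)).toReal = ∫ r in Set.Iic s, f₀ r := by
    intro s
    rw [hν, withDensity_apply _ measurableSet_Iic,
      ← ofReal_integral_eq_lintegral_ofReal hint.integrableOn
        (ae_restrict_of_forall_mem measurableSet_Iic fun x _ => hnn x),
      ENNReal.toReal_ofReal (setIntegral_nonneg measurableSet_Iic fun x _ => hnn x)]
  rw [← h1, rep ν hη u]
  congr 1; ext s; rw [h2 s]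

lemma part2_bound (f₀ : ℝ → ℝ) (hc : Continuous f₀) (hnn : ∀ x, 0 ≤ f₀ x) (M : ℝ)
    (hM : ∀ x, f₀ x ≤ M) {η : ℝ} (hη : 0 < η) (u : ℝ) {δ' θ R : ℝ} (hδ' : 0 < δ')
    (hR : 0 < R)
    (hθ : ∀ a b : ℝ, |a - b| < θ → |f₀ a - f₀ b| ≤ δ')
    (hηR : η * R < θ)
    (htail : ∫ x in (Set.Icc (-R) R)ᶜ, gaussK x ≤ δ' / (2 * M + 1)) :
    |(∫ x, gaussK x * f₀ (u - η * x)) - f₀ u| ≤ 2 * δ' := by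
  have hM0 : 0 ≤ M := le_trans (hnn 0) (hM 0)
  have hint1 : Integrable fun x => gaussK x * f₀ (u - η * x) := by
    refine (gaussK_integrable.const_mul M).mono'
      ((gaussK_continuous.mul (hc.comp (by fun_prop))).aestronglyMeasurable)
      (Eventually.of_forall fun x => ?_)
    rw [Real.norm_eq_abs, abs_mul, abs_of_nonneg (gaussK_nonneg x), abs_of_nonneg (hnn _)]
    have := hM (u - η * x)
    nlinarith [gaussK_nonneg x]
  have hf₀u : f₀ u = ∫ x, gaussK x * f₀ u := by
    rw [integral_mul_const, gaussK_integral, one_mul]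
  have hdiff : (∫ x, gaussK x * f₀ (u - η * x)) - f₀ u
      = ∫ x, gaussK x * (f₀ (u - η * x) - f₀ u) := by
    have h2 : ∫ x, gaussK x * (f₀ (u - η * x) - f₀ u)
        = (∫ x, gaussK x * f₀ (u - η * x)) - ∫ x, gaussK x * f₀ u := by
      rw [← integral_sub hint1 (gaussK_integrable.mul_const _)]
      congr 1; ext x; ring
    rw [h2, ← hf₀u]
  have hDcont : Continuous fun x => gaussK x * (f₀ (u - η * x) - f₀ u) :=
    gaussK_continuous.mul ((hc.comp (by fun_prop)).sub continuous_const)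
  have hintD : Integrable fun x => |gaussK x * (f₀ (u - η * x) - f₀ u)| := by
    refine (gaussK_integrable.const_mul (2 * M)).mono'
      (hDcont.abs.aestronglyMeasurable) (Eventually.of_forall fun x => ?_)
    rw [Real.norm_eq_abs, abs_abs, abs_mul, abs_of_nonneg (gaussK_nonneg x)]
    have h1 : |f₀ (u - η * x) - f₀ u| ≤ 2 * M := by
      rw [abs_sub_le_iff]
      constructor <;> nlinarith [hnn (u - η * x), hnn u, hM (u - η * x), hM u]
    nlinarith [gaussK_nonneg x]
  have hsplit : ∫ x, |gaussK x * (f₀ (u - η * x) - f₀ u)|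
      = (∫ x in Set.Icc (-R) R, |gaussK x * (f₀ (u - η * x) - f₀ u)|)
        + ∫ x in (Set.Icc (-R) R)ᶜ, |gaussK x * (f₀ (u - η * x) - f₀ u)| :=
    (integral_add_compl measurableSet_Icc hintD).symm
  have hIcc : (∫ x in Set.Icc (-R) R, |gaussK x * (f₀ (u - η * x) - f₀ u)|) ≤ δ' := by
    have hle : ∀ x ∈ Set.Icc (-R) R, |gaussK x * (f₀ (u - η * x) - f₀ u)| ≤ gaussK x * δ' := by
      intro x hx
      rw [abs_mul, abs_of_nonneg (gaussK_nonneg x)]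
      have hxR : |x| ≤ R := abs_le.2 ⟨hx.1, hx.2⟩
      have : |(u - η * x) - u| < θ := by
        rw [show (u - η * x) - u = -(η * x) by ring, abs_neg, abs_mul, abs_of_pos hη]
        calc η * |x| ≤ η * R := by nlinarith
        _ < θ := hηR
      have := hθ _ _ this
      nlinarith [gaussK_nonneg x]
    calc (∫ x in Set.Icc (-R) R, |gaussK x * (f₀ (u - η * x) - f₀ u)|)
        ≤ ∫ x in Set.Icc (-R) R, gaussK x * δ' := by
          refine setIntegral_mono_on hintD.integrableOn
            ((gaussK_integrable.mul_const δ').integrableOn) measurableSet_Icc hle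
      _ ≤ ∫ x, gaussK x * δ' := by
          refine setIntegral_le_integral (gaussK_integrable.mul_const δ')
            (Eventually.of_forall fun x => mul_nonneg (gaussK_nonneg x) hδ'.le)
      _ = δ' := by rw [integral_mul_const, gaussK_integral, one_mul]
  have hcompl : (∫ x in (Set.Icc (-R) R)ᶜ, |gaussK x * (f₀ (u - η * x) - f₀ u)|) ≤ δ' := by
    have hle : ∀ x, |gaussK x * (f₀ (u - η * x) - f₀ u)| ≤ gaussK x * (2 * M) := by
      intro x
      rw [abs_mul, abs_of_nonneg (gaussK_nonneg x)]
      have h1 : |f₀ (u - η * x) - f₀ u| ≤ 2 * M := by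
        rw [abs_sub_le_iff]
        constructor <;> nlinarith [hnn (u - η * x), hnn u, hM (u - η * x), hM u]
      nlinarith [gaussK_nonneg x]
    calc (∫ x in (Set.Icc (-R) R)ᶜ, |gaussK x * (f₀ (u - η * x) - f₀ u)|)
        ≤ ∫ x in (Set.Icc (-R) R)ᶜ, gaussK x * (2 * M) := by
          refine setIntegral_mono hintD.integrableOn
            ((gaussK_integrable.mul_const _).integrableOn) fun x => hle x
      _ = (∫ x in (Set.Icc (-R) R)ᶜ, gaussK x) * (2 * M) := by rw [integral_mul_const]
      _ ≤ (δ' / (2 * M + 1)) * (2 * M) := by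
          apply mul_le_mul_of_nonneg_right htail (by positivity)
      _ ≤ δ' := by
          rw [div_mul_eq_mul_div, div_le_iff₀ (by positivity)]
          nlinarith
  calc |(∫ x, gaussK x * f₀ (u - η * x)) - f₀ u|
      = |∫ x, gaussK x * (f₀ (u - η * x) - f₀ u)| := by rw [hdiff]
    _ ≤ ∫ x, |gaussK x * (f₀ (u - η * x) - f₀ u)| := by
        have := norm_integral_le_integral_norm (μ := volume)
          (fun x => gaussK x * (f₀ (u - η * x) - f₀ u))
        simpa only [Real.norm_eq_abs] using this
    _ ≤ δ' + δ' := by rw [hsplit]; exact add_le_add hIcc hcompl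
    _ = 2 * δ' := by ring

lemma part1_bound (Fs : StieltjesFunction ℝ) (C : ℝ) (hC : ∀ t, |Fs t| ≤ C)
    (F₀ : ℝ → ℝ) (hF₀mono : Monotone F₀) (hF₀bd : ∀ t, |F₀ t| ≤ 1)
    (ε : ℝ) (hεge : ∀ t, |Fs t - F₀ t| ≤ ε) {η : ℝ} (hη : 0 < η) (u : ℝ) :
    |(∫ t, η⁻¹ * gaussK ((u - t) / η) ∂Fs.measure) - ∫ s, F₀ s * (-kd η u s)|
      ≤ ε * (η⁻¹ * ∫ x, |x * gaussK x|) := by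
  have hε0 : 0 ≤ ε := le_trans (abs_nonneg _) (hεge 0)
  have hbddB : BddBelow (Set.range Fs.toFun) :=
    ⟨-C, fun x ⟨t, ht⟩ => ht ▸ neg_le_of_abs_le (hC t)⟩
  have hbddA : BddAbove (Set.range Fs.toFun) :=
    ⟨C, fun x ⟨t, ht⟩ => ht ▸ le_of_abs_le (hC t)⟩
  set l : ℝ := ⨅ t, Fs t with hl
  have hlt : Tendsto Fs atBot (𝓝 l) := tendsto_atBot_ciInf Fs.mono hbddB
  have htop : Tendsto Fs atTop (𝓝 (⨆ t, Fs t)) := tendsto_atTop_ciSup Fs.mono hbddA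
  haveI : IsFiniteMeasure Fs.measure :=
    ⟨by rw [Fs.measure_univ hlt htop]; exact ENNReal.ofReal_lt_top⟩
  have hl_le : ∀ s, l ≤ Fs s := fun s => ciInf_le hbddB s
  have hFmeas : Measurable Fs.toFun := Fs.mono.measurable
  have hrep : (∫ t, η⁻¹ * gaussK ((u - t) / η) ∂Fs.measure)
      = ∫ s, (Fs s - l) * (-kd η u s) := by
    rw [rep Fs.measure hη u]
    congr 1; ext s
    rw [Fs.measure_Iic hlt s, ENNReal.toReal_ofReal (sub_nonneg.2 (hl_le s))]
  have iK : Integrable (fun s => -kd η u s) := (kd_integrable hη u).neg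
  have iA : Integrable fun s => (Fs s - l) * (-kd η u s) :=
    iK.bdd_mul ((hFmeas.sub measurable_const).aestronglyMeasurable)
      (c := C + |l|) (Eventually.of_forall fun s => by
        rw [Real.norm_eq_abs]
        calc |Fs s - l| ≤ |Fs s| + |l| := abs_sub _ _
        _ ≤ C + |l| := add_le_add (hC s) le_rfl)
  have iB : Integrable fun s => F₀ s * (-kd η u s) :=
    iK.bdd_mul (hF₀mono.measurable.aestronglyMeasurable)
      (c := 1) (Eventually.of_forall fun s => by rw [Real.norm_eq_abs]; exact hF₀bd s)
  have iC : Integrable fun s => (Fs s - F₀ s) * (-kd η u s) :=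
    iK.bdd_mul (((hFmeas.sub hF₀mono.measurable)).aestronglyMeasurable)
      (c := ε) (Eventually.of_forall fun s => by rw [Real.norm_eq_abs]; exact hεge s)
  have iD : Integrable fun s => l * kd η u s := (kd_integrable hη u).const_mul l
  have hkey : (∫ t, η⁻¹ * gaussK ((u - t) / η) ∂Fs.measure) - (∫ s, F₀ s * (-kd η u s))
      = ∫ s, (Fs s - F₀ s) * (-kd η u s) := by
    rw [hrep, ← integral_sub iA iB]
    have : (fun s => (Fs s - l) * (-kd η u s) - F₀ s * (-kd η u s))
        = fun s => (Fs s - F₀ s) * (-kd η u s) + l * kd η u s := by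
      ext s; ring
    rw [this, integral_add iC iD, integral_const_mul, kd_total hη u, mul_zero, add_zero]
  rw [hkey, ← kd_norm_integral hη u, ← integral_const_mul]
  have h1 : |∫ s, (Fs s - F₀ s) * (-kd η u s)| ≤ ∫ s, |(Fs s - F₀ s) * (-kd η u s)| := by
    have := norm_integral_le_integral_norm (μ := volume) (fun s => (Fs s - F₀ s) * (-kd η u s))
    simpa only [Real.norm_eq_abs] using this
  refine h1.trans (integral_mono iC.abs (((kd_integrable hη u).abs).const_mul ε) fun s => ?_)
  rw [abs_mul, abs_neg]
  exact mul_le_mul_of_nonneg_right (hεge s) (abs_nonneg _)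

/-- Kernel density estimation: if `F_n → F₀` uniformly at rate `ε_n` with bandwidths
`η_n → 0` and `ε_n/η_n → 0`, and `f₀` is uniformly continuous on `ℝ`, then
`sup_u |f_n(u) − f₀(u)| → 0`. -/
theorem kernel_density_estimate_tendstoUniformly_of_uniformContinuous
    (f₀ : ℝ → ℝ) (hf₀nn : ∀ x, 0 ≤ f₀ x)
    (M : ℝ) (hf₀bdd : ∀ x, f₀ x ≤ M)
    (hf₀int : Integrable f₀) (hf₀prob : ∫ x, f₀ x = 1)
    (F₀ : ℝ → ℝ) (hF₀ : ∀ t, F₀ t = ∫ s in Set.Iic t, f₀ s)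
    (F : ℕ → StieltjesFunction ℝ)
    (hFbdd : ∀ n, ∃ C, ∀ t, |F n t| ≤ C)
    (η : ℕ → ℝ) (hηpos : ∀ n, 0 < η n)
    (hη0 : Tendsto η atTop (𝓝 0))
    (hε : Tendsto (fun n => (⨆ t, |F n t - F₀ t|) / η n) atTop (𝓝 0))
    (φ : ℝ → ℝ) (hφ : ∀ x, φ x = (Real.sqrt (2 * Real.pi))⁻¹ * Real.exp (-x ^ 2 / 2))
    (fn : ℕ → ℝ → ℝ)
    (hfn : ∀ n u, fn n u = ∫ t, (η n)⁻¹ * φ ((u - t) / η n) ∂(F n).measure)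
    (hucont : UniformContinuous f₀) :
    TendstoUniformly (fun n u => fn n u) f₀ atTop := by
  have hφg : φ = gaussK := funext fun x => hφ x
  have hf₀cont : Continuous f₀ := hucont.continuous
  have hM0 : 0 ≤ M := le_trans (hf₀nn 0) (hf₀bdd 0)
  -- F₀ facts
  have hF₀mono : Monotone F₀ := by
    intro a b hab
    rw [hF₀ a, hF₀ b]
    exact setIntegral_mono_set hf₀int.integrableOn
      (ae_restrict_of_forall_mem measurableSet_Iic fun x _ => hf₀nn x)
      (HasSubset.Subset.eventuallyLE (Set.Iic_subset_Iic.2 hab))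
  have hF₀bd : ∀ t, |F₀ t| ≤ 1 := by
    intro t
    rw [hF₀ t, abs_of_nonneg (setIntegral_nonneg measurableSet_Iic fun x _ => hf₀nn x)]
    rw [← hf₀prob]
    exact setIntegral_le_integral hf₀int (Eventually.of_forall hf₀nn)
  set ε : ℕ → ℝ := fun n => ⨆ t, |F n t - F₀ t| with hεdef
  have hεge : ∀ n t, |F n t - F₀ t| ≤ ε n := by
    intro n t
    obtain ⟨C, hC⟩ := hFbdd n
    refine le_ciSup (f := fun t => |F n t - F₀ t|) ⟨C + 1, ?_⟩ t
    rintro x ⟨t', rfl⟩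
    calc |F n t' - F₀ t'| ≤ |F n t'| + |F₀ t'| := abs_sub _ _
    _ ≤ C + 1 := add_le_add (hC t') (hF₀bd t')
  have hεnn : ∀ n, 0 ≤ ε n := fun n => le_trans (abs_nonneg _) (hεge n 0)
  set A0 : ℝ := ∫ x, |x * gaussK x| with hA0def
  have hA0 : 0 ≤ A0 := integral_nonneg fun x => abs_nonneg _
  set g : ℕ → ℝ → ℝ := fun n u => ∫ s, F₀ s * (-kd (η n) u s) with hgdef
  have hfng : ∀ n u, |fn n u - g n u| ≤ (ε n / η n) * A0 := by
    intro n u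
    obtain ⟨C, hC⟩ := hFbdd n
    have := part1_bound (F n) C hC F₀ hF₀mono hF₀bd (ε n) (hεge n) (hηpos n) u
    rw [hfn n u, hφg]
    calc |(∫ t, (η n)⁻¹ * gaussK ((u - t) / η n) ∂(F n).measure) - g n u|
        ≤ ε n * ((η n)⁻¹ * A0) := this
      _ = (ε n / η n) * A0 := by rw [div_eq_mul_inv]; ring
  have hgconv : ∀ n u, g n u = ∫ x, gaussK x * f₀ (u - η n * x) := by
    intro n u
    rw [← conv_chvar (hηpos n) u f₀, conv_rep (hηpos n) u f₀ hf₀cont hf₀nn hf₀int, hgdef]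
    simp only
    congr 1; ext s; rw [hF₀ s]
  -- main ε-δ argument
  rw [Metric.tendstoUniformly_iff]
  intro δ hδ
  set δ' : ℝ := δ / 4 with hδ'def
  have hδ' : 0 < δ' := by positivity
  obtain ⟨θ, hθpos, hθ⟩ := Metric.uniformContinuous_iff.mp hucont δ' hδ'
  have hθ' : ∀ a b : ℝ, |a - b| < θ → |f₀ a - f₀ b| ≤ δ' := by
    intro a b hab
    exact le_of_lt (by rw [← Real.dist_eq]; exact hθ (by rwa [Real.dist_eq]))
  -- choose R
  have hti : Tendsto (fun R : ℝ => ∫ x in (-R)..R, gaussK x) atTop (𝓝 1) := by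
    have := intervalIntegral_tendsto_integral gaussK_integrable
      (tendsto_neg_atTop_atBot (G := ℝ)) (tendsto_id (α := ℝ) (x := atTop))
    rwa [gaussK_integral] at this
  have hlt1 : 1 - δ' / (2 * M + 1) < 1 := by
    have : 0 < δ' / (2 * M + 1) := by positivity
    linarith
  obtain ⟨R, hR1, hR2⟩ := ((hti.eventually_const_lt hlt1).and (eventually_ge_atTop (1:ℝ))).exists
  have hRpos : 0 < R := lt_of_lt_of_le one_pos hR2
  have hIcc_eq : ∫ x in Set.Icc (-R) R, gaussK x = ∫ x in (-R)..R, gaussK x := by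
    rw [intervalIntegral.integral_of_le (by linarith), integral_Icc_eq_integral_Ioc]
  have htail : ∫ x in (Set.Icc (-R) R)ᶜ, gaussK x ≤ δ' / (2 * M + 1) := by
    have hsum : (∫ x in Set.Icc (-R) R, gaussK x) + ∫ x in (Set.Icc (-R) R)ᶜ, gaussK x
        = ∫ x, gaussK x := integral_add_compl measurableSet_Icc gaussK_integrable
    rw [gaussK_integral, hIcc_eq] at hsum
    linarith
  have hev1 : ∀ᶠ n in atTop, ε n / η n < δ' / (A0 + 1) :=
    hε.eventually_lt_const (by positivity)
  have hev2 : ∀ᶠ n in atTop, η n < θ / R :=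
    hη0.eventually_lt_const (by positivity)
  filter_upwards [hev1, hev2] with n h1 h2
  intro u
  have hηR : η n * R < θ := by
    rw [lt_div_iff₀ hRpos] at h2
    exact h2
  have hb2 : |g n u - f₀ u| ≤ 2 * δ' := by
    rw [hgconv n u]
    exact part2_bound f₀ hf₀cont hf₀nn M hf₀bdd (hηpos n) u hδ' hRpos hθ' hηR htail
  have hb1 : |fn n u - g n u| ≤ (ε n / η n) * A0 := hfng n u
  have hq : (ε n / η n) * A0 < δ' := by
    have hnn : 0 ≤ ε n / η n := div_nonneg (hεnn n) (hηpos n).le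
    have h3 : (ε n / η n) * (A0 + 1) < (δ' / (A0 + 1)) * (A0 + 1) :=
      mul_lt_mul_of_pos_right h1 (by positivity)
    rw [div_mul_cancel₀ _ (by positivity : A0 + 1 ≠ 0)] at h3
    nlinarith
  rw [dist_comm, Real.dist_eq]
  calc |fn n u - f₀ u| ≤ |fn n u - g n u| + |g n u - f₀ u| := abs_sub_le _ _ _
    _ < δ' + (2 * δ' + δ') := by linarith [hb1, hb2, hq]
    _ ≤ δ := by rw [hδ'def]; linarith
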